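/- Let S →^i (X, H) ←^o T and T →^{i'} (Y, G) ←^{o'} U be composable open Markov processes, and let j : X → Z, k : Y → Z exhibit Z as a pushout of o : T → X and i' : T → Y, so that the composite open Markov process is S →^{j∘i} (Z, H ⊙ G) ←^{k∘o'} U with H ⊙ G = j_* H j^* + k_* G k^*. Then the black-boxing of the composite equals the composite of the black-boxings as linear relations: the set of (a, I, c, O') ∈ ℝ^S ⊕ ℝ^S ⊕ ℝ^U ⊕ ℝ^U lying in the black-boxing of S → (Z, H ⊙ G) ← U equals the set of (a, I, c, O') such that there exist (b, O) ∈ ℝ^T ⊕ ℝ^T with (a, I, b, O) in the black-boxing of S → (X, H) ← T and (b, O, c, O') in the black-boxing of T → (Y, G) ← U. -/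
import Mathlib


open scoped BigOperators

noncomputable section

/-- The pushforward of vectors along a map of finite sets:
`(f_* v) b = ∑_{a : f a = b} v a`. -/
def pushforward {A B : Type} [Fintype A] [DecidableEq B] (f : A → B) :
    (A → ℝ) →ₗ[ℝ] (B → ℝ) where
  toFun v := fun b => ∑ a ∈ Finset.univ.filter (fun a => f a = b), v a
  map_add' u v := by
    funext b
    simp [Finset.sum_add_distrib]
  map_smul' c v := by
    funext b
    simp [Finset.mul_sum]

/-- The pullback of vectors along a map of finite sets: `f^* v = v ∘ f`. -/
def pullback {A B : Type} (f : A → B) : (B → ℝ) →ₗ[ℝ] (A → ℝ) where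
  toFun v := v ∘ f
  map_add' _ _ := rfl
  map_smul' _ _ := rfl

/-- A probability distribution on a finite set: nonnegative components summing to 1. -/
def IsProbDist {A : Type} [Fintype A] (v : A → ℝ) : Prop :=
  (∀ a, 0 ≤ v a) ∧ ∑ a, v a = 1

/-- A linear operator is stochastic if it maps probability distributions to
probability distributions. -/
def IsStochasticOp {A B : Type} [Fintype A] [Fintype B]
    (T : (A → ℝ) →ₗ[ℝ] (B → ℝ)) : Prop :=
  ∀ v, IsProbDist v → IsProbDist (T v)

/-- An operator `H` is infinitesimal stochastic if its off-diagonal matrix entries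
`H_{ij} = (H e_j) i` are nonnegative and each column sums to zero. -/
def IsInfinitesimalStochastic {A : Type} [Fintype A] [DecidableEq A]
    (H : (A → ℝ) →ₗ[ℝ] (A → ℝ)) : Prop :=
  (∀ i j, i ≠ j → 0 ≤ H (Pi.single j 1) i) ∧ ∀ j, ∑ i, H (Pi.single j 1) i = 0

/-- A stochastic section for `p : X → X'` is a stochastic operator
`s : ℝ^{X'} → ℝ^X` with `p_* ∘ s = 1`. -/
def IsStochasticSection {X X' : Type} [Fintype X] [Fintype X'] [DecidableEq X']
    (p : X → X') (s : (X' → ℝ) →ₗ[ℝ] (X → ℝ)) : Prop :=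
  IsStochasticOp s ∧ pushforward p ∘ₗ s = LinearMap.id

/-- A matrix is stochastic if it maps probability distributions to probability
distributions. -/
def IsStochasticMat {A B : Type} [Fintype A] [Fintype B] (T : Matrix B A ℝ) : Prop :=
  ∀ v, IsProbDist v → IsProbDist (T.mulVec v)

/-- A matrix is infinitesimal stochastic if its off-diagonal entries are nonnegative
and its columns sum to zero. -/
def IsInfStochMat {A : Type} [Fintype A] (H : Matrix A A ℝ) : Prop :=
  (∀ i j, i ≠ j → 0 ≤ H i j) ∧ ∀ j, ∑ i, H i j = 0

/-- A Markov semigroup: a continuous one-parameter semigroup of stochastic matrices. -/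
def IsMarkovSemigroup {A : Type} [Fintype A] [DecidableEq A] (U : ℝ → Matrix A A ℝ) : Prop :=
  (∀ t : ℝ, 0 ≤ t → IsStochasticMat (U t)) ∧ U 0 = 1 ∧
    (∀ s t : ℝ, 0 ≤ s → 0 ≤ t → U (s + t) = U s * U t) ∧
    ∀ v : A → ℝ, ContinuousOn (fun t => (U t).mulVec v) (Set.Ici 0)

/-- The (matrix of the) pushforward along `f`. -/
def pushMat {A B : Type} [DecidableEq B] (f : A → B) : Matrix B A ℝ :=
  Matrix.of fun b a => if f a = b then 1 else 0

/-- A commuting square of maps that is a pullback: every compatible pair has a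
unique common preimage. -/
def IsPullbackSquare {A B C D : Type} (f : A → B) (g : A → C) (h : B → D) (k : C → D) : Prop :=
  (∀ a, h (f a) = k (g a)) ∧ ∀ (b : B) (c : C), h b = k c → ∃! a, f a = b ∧ g a = c

/-- A commuting square of maps satisfying the universal property of a pushout. -/
def IsPushoutSquare {T X Y Z : Type} (o : T → X) (i' : T → Y) (j : X → Z) (k : Y → Z) : Prop :=
  (∀ t, j (o t) = k (i' t)) ∧
    ∀ (W : Type) (u : X → W) (u' : Y → W), (∀ t, u (o t) = u' (i' t)) →
      ∃! w : Z → W, (∀ x, w (j x) = u x) ∧ ∀ y, w (k y) = u' y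

/-- The black-boxing of an open Markov process `S → (X,H) ← T`: the set of
steady-state boundary data `(i^* v, I, o^* v, O)`. -/
def blackBox {S X T : Type} [Fintype S] [Fintype T] [DecidableEq X]
    (i : S → X) (o : T → X) (H : (X → ℝ) →ₗ[ℝ] (X → ℝ)) :
    Set ((S → ℝ) × (S → ℝ) × (T → ℝ) × (T → ℝ)) :=
  {w | ∃ (v : X → ℝ) (I : S → ℝ) (O : T → ℝ),
    H v + pushforward i I - pushforward o O = 0 ∧
    w = (pullback i v, I, pullback o v, O)}

/-- The direct sum of two operators, under the canonical identification
`ℝ^{X ⊕ Y} ≃ ℝ^X ⊕ ℝ^Y`. -/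
def dsum {A B : Type} (H : (A → ℝ) →ₗ[ℝ] (A → ℝ)) (G : (B → ℝ) →ₗ[ℝ] (B → ℝ)) :
    (A ⊕ B → ℝ) →ₗ[ℝ] (A ⊕ B → ℝ) :=
  (LinearEquiv.sumArrowLequivProdArrow A B ℝ ℝ).symm.toLinearMap ∘ₗ
    (H.prodMap G) ∘ₗ (LinearEquiv.sumArrowLequivProdArrow A B ℝ ℝ).toLinearMap

section Aux

lemma pushforward_apply_of_injective {A B : Type} [Fintype A] [DecidableEq B]
    {f : A → B} (hf : Function.Injective f) (v : A → ℝ) (a : A) :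
    pushforward f v (f a) = v a := by
  have h : Finset.univ.filter (fun a' => f a' = f a) = {a} := by
    ext a'; simp [hf.eq_iff]
  simp [pushforward, h]

lemma pushforward_apply_of_not_mem {A B : Type} [Fintype A] [DecidableEq B]
    {f : A → B} (v : A → ℝ) {b : B} (h : ∀ a, f a ≠ b) :
    pushforward f v b = 0 := by
  have h' : Finset.univ.filter (fun a => f a = b) = ∅ := by
    ext a; simp [h a]
  simp [pushforward, h']

lemma pushforward_comp {A B C : Type} [Fintype A] [Fintype B] [DecidableEq B] [DecidableEq C]
    (g : A → B) (f : B → C) (v : A → ℝ) :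
    pushforward f (pushforward g v) = pushforward (f ∘ g) v := by
  funext c
  simp only [pushforward, LinearMap.coe_mk, AddHom.coe_mk]
  rw [Finset.sum_fiberwise_eq_sum_filter Finset.univ (Finset.univ.filter fun b => f b = c) g v]
  congr 1
  ext a
  simp [Function.comp]

/-- The equivalence relation used to build a concrete model of the pushout. -/
def poRel {T X Y : Type} (o : T → X) (i' : T → Y) : X ⊕ Y → X ⊕ Y → Prop
  | Sum.inl x, Sum.inl x' => x = x'
  | Sum.inl x, Sum.inr y => ∃ t, o t = x ∧ i' t = y
  | Sum.inr y, Sum.inl x => ∃ t, o t = x ∧ i' t = y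
  | Sum.inr y, Sum.inr y' => y = y'

lemma poRel_equivalence {T X Y : Type} (o : T → X) (i' : T → Y)
    (ho : Function.Injective o) (hi' : Function.Injective i') :
    Equivalence (poRel o i') := by
  constructor
  · rintro (x | y) <;> rfl
  · rintro (x | y) (x' | y') h <;> first | exact h.symm | exact h
  · rintro (x | y) (x' | y') (x'' | y'') h1 h2
    · exact h1.trans h2
    · subst h1; exact h2
    · obtain ⟨t, ht1, ht2⟩ := h1
      obtain ⟨t', ht1', ht2'⟩ := h2
      have : t = t' := hi' (ht2.trans ht2'.symm)
      subst this
      exact ht1.symm.trans ht1'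
    · obtain ⟨t, ht1, ht2⟩ := h1
      subst h2
      exact ⟨t, ht1, ht2⟩
    · subst h2; exact h1
    · obtain ⟨t, ht1, ht2⟩ := h1
      obtain ⟨t', ht1', ht2'⟩ := h2
      have : t = t' := ho (ht1.trans ht1'.symm)
      subst this
      exact ht2.symm.trans ht2'
    · subst h1; exact h2
    · exact h1.trans h2

lemma pushout_structure {T X Y Z : Type} {o : T → X} {i' : T → Y}
    (ho : Function.Injective o) (hi' : Function.Injective i')
    {j : X → Z} {k : Y → Z} (hpo : IsPushoutSquare o i' j k) :
    Function.Injective j ∧ Function.Injective k ∧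
      (∀ z, (∃ x, j x = z) ∨ (∃ y, k y = z)) ∧
      (∀ x y, j x = k y → ∃ t, o t = x ∧ i' t = y) := by
  obtain ⟨hcomm, huniv⟩ := hpo
  -- joint surjectivity from uniqueness
  have hsurj : ∀ z, (∃ x, j x = z) ∨ (∃ y, k y = z) := by
    obtain ⟨w1, hw1, huniq⟩ := huniv Prop (fun _ => True) (fun _ => True) (fun _ => rfl)
    intro z
    have h1 : (fun _ : Z => True) = w1 := huniq _ ⟨fun _ => rfl, fun _ => rfl⟩
    have h2 : (fun z' : Z => (∃ x, j x = z') ∨ (∃ y, k y = z')) = w1 :=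
      huniq _ ⟨fun x => eq_true (Or.inl ⟨x, rfl⟩), fun y => eq_true (Or.inr ⟨y, rfl⟩)⟩
    have := (h2.trans h1.symm)
    have := congrFun this z
    exact this.symm ▸ trivial
  -- the comparison map to the concrete pushout
  letI st : Setoid (X ⊕ Y) := ⟨poRel o i', poRel_equivalence o i' ho hi'⟩
  obtain ⟨w, ⟨hwj, hwk⟩, -⟩ := huniv (Quotient st)
    (fun x => Quotient.mk st (Sum.inl x)) (fun y => Quotient.mk st (Sum.inr y))
    (fun t => Quotient.sound ⟨t, rfl, rfl⟩)
  refine ⟨?_, ?_, hsurj, ?_⟩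
  · intro x x' h
    have h2 : Quotient.mk st (Sum.inl x) = Quotient.mk st (Sum.inl x') := by
      rw [← hwj, ← hwj, h]
    exact Quotient.exact h2
  · intro y y' h
    have h2 : Quotient.mk st (Sum.inr y) = Quotient.mk st (Sum.inr y') := by
      rw [← hwk, ← hwk, h]
    exact Quotient.exact h2
  · intro x y h
    have h2 : Quotient.mk st (Sum.inl x) = Quotient.mk st (Sum.inr y) := by
      rw [← hwj, ← hwk, h]
    exact Quotient.exact h2

end Aux

/-- Black-boxing preserves composition: the black-boxing of the
composite of two open Markov processes equals the composite of their black-boxings as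
linear relations. -/
theorem blackBox_composite
    {S X T Y U Z : Type}
    [Fintype S] [Fintype X] [Fintype T] [Fintype Y] [Fintype U]
    [DecidableEq X] [DecidableEq Y] [DecidableEq Z]
    (i : S → X) (o : T → X) (hi : Function.Injective i) (ho : Function.Injective o)
    (H : (X → ℝ) →ₗ[ℝ] (X → ℝ)) (hH : IsInfinitesimalStochastic H)
    (i' : T → Y) (o' : U → Y) (hi' : Function.Injective i') (ho' : Function.Injective o')
    (G : (Y → ℝ) →ₗ[ℝ] (Y → ℝ)) (hG : IsInfinitesimalStochastic G)
    (j : X → Z) (k : Y → Z) (hpo : IsPushoutSquare o i' j k) :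
    blackBox (j ∘ i) (k ∘ o')
        (pushforward j ∘ₗ H ∘ₗ pullback j + pushforward k ∘ₗ G ∘ₗ pullback k) =
      {w : (S → ℝ) × (S → ℝ) × (U → ℝ) × (U → ℝ) |
        ∃ (b : T → ℝ) (O : T → ℝ),
          (w.1, w.2.1, b, O) ∈ blackBox i o H ∧
          (b, O, w.2.2.1, w.2.2.2) ∈ blackBox i' o' G} := by
  obtain ⟨hjinj, hkinj, hsurj, hint⟩ := pushout_structure ho hi' hpo
  have hjo : j ∘ o = k ∘ i' := funext hpo.1
  ext ⟨a, Iw, c, Ow⟩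
  simp only [Set.mem_setOf_eq, blackBox, Prod.mk.injEq]
  constructor
  · rintro ⟨vz, I, O', heq, ha, hI, hc, hO'⟩
    subst ha hI hc hO'
    set v : X → ℝ := pullback j vz with hv
    set v' : Y → ℝ := pullback k vz with hv'
    set φ : X → ℝ := H v + pushforward i Iw with hφ
    set ψ : Y → ℝ := G v' - pushforward o' Ow with hψ
    have key : pushforward j φ + pushforward k ψ = 0 := by
      rw [hφ, hψ, map_add, map_sub, ← heq, ← pushforward_comp i j, ← pushforward_comp o' k]
      simp only [LinearMap.add_apply, LinearMap.comp_apply, ← hv, ← hv']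
      abel
    have keyz : ∀ z, pushforward j φ z + pushforward k ψ z = 0 := by
      intro z
      have := congrFun key z
      simpa using this
    -- φ vanishes off the image of o
    have hφ0 : ∀ x, (∀ t, o t ≠ x) → φ x = 0 := by
      intro x hx
      have h1 : pushforward j φ (j x) = φ x := pushforward_apply_of_injective hjinj φ x
      have h2 : pushforward k ψ (j x) = 0 := by
        apply pushforward_apply_of_not_mem
        intro y hy
        obtain ⟨t, ht1, ht2⟩ := hint x y hy.symm
        exact hx t ht1
      have := keyz (j x)
      rw [h1, h2] at this
      linarith
    -- ψ vanishes off the image of i'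
    have hψ0 : ∀ y, (∀ t, i' t ≠ y) → ψ y = 0 := by
      intro y hy
      have h1 : pushforward k ψ (k y) = ψ y := pushforward_apply_of_injective hkinj ψ y
      have h2 : pushforward j φ (k y) = 0 := by
        apply pushforward_apply_of_not_mem
        intro x hx
        obtain ⟨t, ht1, ht2⟩ := hint x y hx
        exact hy t ht2
      have := keyz (k y)
      rw [h1, h2] at this
      linarith
    -- on T, φ and ψ are opposite
    have hφψ : ∀ t, φ (o t) + ψ (i' t) = 0 := by
      intro t
      have h1 : pushforward j φ (j (o t)) = φ (o t) :=
        pushforward_apply_of_injective hjinj φ (o t)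
      have h2 : pushforward k ψ (j (o t)) = ψ (i' t) := by
        rw [hpo.1 t]
        exact pushforward_apply_of_injective hkinj ψ (i' t)
      have := keyz (j (o t))
      rw [h1, h2] at this
      exact this
    refine ⟨pullback o v, fun t => φ (o t), ⟨v, Iw, fun t => φ (o t), ?_, rfl, rfl, rfl, rfl⟩,
      ⟨v', fun t => φ (o t), Ow, ?_, ?_, rfl, ?_, rfl⟩⟩
    · -- H v + i_* I - o_* O = 0
      have hO : pushforward o (fun t => φ (o t)) = φ := by
        funext x
        by_cases hx : ∃ t, o t = x
        · obtain ⟨t, rfl⟩ := hx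
          exact pushforward_apply_of_injective ho _ t
        · push_neg at hx
          rw [pushforward_apply_of_not_mem _ hx, hφ0 x hx]
      rw [hO, hφ]
      abel
    · -- G v' + i'_* O - o'_* O' = 0
      have hO : pushforward i' (fun t => φ (o t)) = -ψ := by
        funext y
        by_cases hy : ∃ t, i' t = y
        · obtain ⟨t, rfl⟩ := hy
          rw [pushforward_apply_of_injective hi' _ t]
          have := hφψ t
          simp only [Pi.neg_apply]
          linarith
        · push_neg at hy
          rw [pushforward_apply_of_not_mem _ hy]
          simp [hψ0 y hy]
      rw [hO, hψ]
      abel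
    · -- b agrees
      funext t
      show vz (j (o t)) = vz (k (i' t))
      rw [hpo.1 t]
    · -- pullback (k ∘ o') vz = pullback o' v'
      rfl
  · rintro ⟨b, O, ⟨v, I, O₀, hXeq, hXa, hXI, hXb, hXO⟩, ⟨v', I₁, O₁, hYeq, hYb, hYO, hYc, hYO'⟩⟩
    subst hXa hXI hXO hYO hYc hYO'
    obtain ⟨vz, ⟨hvzj, hvzk⟩, -⟩ := hpo.2 ℝ v v' (by
      intro t
      have h1 := congrFun hXb t
      have h2 := congrFun hYb t
      exact (h1.symm.trans h2 : v (o t) = v' (i' t)))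
    have hj : pullback j vz = v := funext hvzj
    have hk : pullback k vz = v' := funext hvzk
    have e1 : H v + pushforward i Iw = pushforward o O := by
      have := sub_eq_zero.mp hXeq
      exact this
    have e2 : G v' - pushforward o' Ow = -(pushforward i' O) := by
      rw [eq_neg_iff_add_eq_zero, ← hYeq]
      abel
    refine ⟨vz, Iw, Ow, ?_, ?_, rfl, ?_, rfl⟩
    · calc (pushforward j ∘ₗ H ∘ₗ pullback j + pushforward k ∘ₗ G ∘ₗ pullback k) vz
            + pushforward (j ∘ i) Iw - pushforward (k ∘ o') Ow
          = pushforward j (H v + pushforward i Iw)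
            + pushforward k (G v' - pushforward o' Ow) := by
            simp only [LinearMap.add_apply, LinearMap.comp_apply, map_add, map_sub,
              ← pushforward_comp i j, ← pushforward_comp o' k, hj, hk]
            abel
        _ = pushforward (j ∘ o) O - pushforward (k ∘ i') O := by
            rw [e1, e2, map_neg, pushforward_comp, pushforward_comp]
            abel
        _ = 0 := by rw [hjo, sub_self]
    · -- a = pullback (j ∘ i) vz
      funext s
      show v (i s) = vz (j (i s))
      rw [hvzj (i s)]
    · -- c = pullback (k ∘ o') vz
      funext u
      show v' (o' u) = vz (k (o' u))
      rw [hvzk (o' u)]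


end
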